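/- arXiv:2010.04317 — 2 statements merged into one kernel-verified Lean document; each statement's English description precedes it below -/
import Mathlib

section
/- Let 1 ≤ d < n and let Δ be a pure (d−1)-dimensional simplicial complex on [n] whose facet set is a nonempty proper subset of [n]_d. Then Δ is a strong f-simplicial complex if and only if Δ^c is a strong f-simplicial complex. -/
open Finset

/-- `Δ`, given as the finset of its faces, is a simplicial complex on the vertex
set `Fin n`: a nonempty collection of subsets closed under taking subsets. -/
def IsComplex {n : ℕ} (Δ : Finset (Finset (Fin n))) : Prop :=
  Δ.Nonempty ∧ ∀ A ∈ Δ, ∀ B ⊆ A, B ∈ Δ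

/-- The facets (maximal faces) of `Δ`. -/
def facets {n : ℕ} (Δ : Finset (Finset (Fin n))) : Finset (Finset (Fin n)) :=
  Δ.filter fun F => ∀ G ∈ Δ, F ⊆ G → F = G

/-- The simplicial complex generated by a family `𝔉`: all subsets of members of `𝔉`. -/
def generated {n : ℕ} (𝔉 : Finset (Finset (Fin n))) : Finset (Finset (Fin n)) :=
  univ.filter fun A => ∃ F ∈ 𝔉, A ⊆ F

/-- The Newton complement dual `Δ^c`: the complex generated by the complements
of the facets of `Δ`. -/
def cdual {n : ℕ} (Δ : Finset (Finset (Fin n))) : Finset (Finset (Fin n)) :=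
  generated ((facets Δ).image fun F => Fᶜ)

/-- The nonface complex of `Δ`: all subsets of `[n]` containing no facet of `Δ`. -/
def nonfaceComplex {n : ℕ} (Δ : Finset (Finset (Fin n))) : Finset (Finset (Fin n)) :=
  univ.filter fun A => ∀ F ∈ facets Δ, ¬ F ⊆ A

/-- `Δ` is an `f`-simplicial complex: for every `k`, `Δ` and its nonface complex
have the same number of `k`-element members (the same `f`-vector). -/
def IsFComplex {n : ℕ} (Δ : Finset (Finset (Fin n))) : Prop :=
  ∀ k : ℕ, (Δ.filter fun A => A.card = k).card =
    ((nonfaceComplex Δ).filter fun A => A.card = k).card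

/-- `Δ` is pure `(d-1)`-dimensional: every facet has exactly `d` elements. -/
def PureDim {n : ℕ} (d : ℕ) (Δ : Finset (Finset (Fin n))) : Prop :=
  ∀ F ∈ facets Δ, F.card = d

/-- The minimal nonfaces of `Δ`: sets that are not faces but all of whose proper
subsets are faces. -/
def minNonfaces {n : ℕ} (Δ : Finset (Finset (Fin n))) : Finset (Finset (Fin n)) :=
  univ.filter fun A => A ∉ Δ ∧ ∀ B ⊂ A, B ∈ Δ

/-- The Alexander dual `Δ^∨`: the complex whose facets are the complements of the
minimal nonfaces of `Δ`. -/
def adual {n : ℕ} (Δ : Finset (Finset (Fin n))) : Finset (Finset (Fin n)) :=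
  generated ((minNonfaces Δ).image fun F => Fᶜ)

/-- The homogeneous complement `Δ'` (in degree `e`): the complex generated by the
`e`-element subsets of `[n]` that are not facets of `Δ`. -/
def hcompl {n : ℕ} (e : ℕ) (Δ : Finset (Finset (Fin n))) : Finset (Finset (Fin n)) :=
  generated (univ.filter fun A : Finset (Fin n) => A.card = e ∧ A ∉ facets Δ)

/-- `Δ` (pure of dimension `e - 1`) is strong: both `Δ` and its homogeneous complement
`Δ'` (in degree `e`) are `f`-simplicial complexes. -/
def IsStrong {n : ℕ} (e : ℕ) (Δ : Finset (Finset (Fin n))) : Prop :=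
  IsFComplex Δ ∧ IsFComplex (hcompl e Δ)

section Aux
variable {n : ℕ}

lemma mem_generated' {𝔉 : Finset (Finset (Fin n))} {A : Finset (Fin n)} :
    A ∈ generated 𝔉 ↔ ∃ F ∈ 𝔉, A ⊆ F := by simp [generated]

lemma mem_facets' {Δ : Finset (Finset (Fin n))} {A : Finset (Fin n)} :
    A ∈ facets Δ ↔ A ∈ Δ ∧ ∀ G ∈ Δ, A ⊆ G → A = G := by simp [facets]

lemma mem_nfc' {Δ : Finset (Finset (Fin n))} {A : Finset (Fin n)} :
    A ∈ nonfaceComplex Δ ↔ ∀ F ∈ facets Δ, ¬ F ⊆ A := by simp [nonfaceComplex]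

lemma facets_antichain' (Δ : Finset (Finset (Fin n))) :
    ∀ F ∈ facets Δ, ∀ G ∈ facets Δ, F ⊆ G → F = G := by
  intro F hF G hG hFG
  rw [mem_facets'] at hF hG
  exact hF.2 G hG.1 hFG

lemma facets_generated' {𝔉 : Finset (Finset (Fin n))}
    (h : ∀ F ∈ 𝔉, ∀ G ∈ 𝔉, F ⊆ G → F = G) : facets (generated 𝔉) = 𝔉 := by
  ext A
  rw [mem_facets']
  constructor
  · rintro ⟨hA, hmax⟩
    obtain ⟨F, hF, hAF⟩ := mem_generated'.1 hA
    have : A = F := hmax F (mem_generated'.2 ⟨F, hF, Subset.rfl⟩) hAF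
    exact this ▸ hF
  · intro hA
    refine ⟨mem_generated'.2 ⟨A, hA, Subset.rfl⟩, ?_⟩
    intro G hG hAG
    obtain ⟨F, hF, hGF⟩ := mem_generated'.1 hG
    have hAF : A = F := h A hA F hF (hAG.trans hGF)
    exact subset_antisymm hAG (hAF ▸ hGF)

lemma generated_facets' {Δ : Finset (Finset (Fin n))} (hΔ : IsComplex Δ) :
    generated (facets Δ) = Δ := by
  ext A
  rw [mem_generated']
  constructor
  · rintro ⟨F, hF, hAF⟩
    exact hΔ.2 F (mem_facets'.1 hF).1 A hAF
  · intro hA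
    have hne : (Δ.filter fun G => A ⊆ G).Nonempty := ⟨A, mem_filter.2 ⟨hA, Subset.rfl⟩⟩
    obtain ⟨F, hF, hmax⟩ := Finset.exists_max_image _ (fun G => G.card) hne
    rw [mem_filter] at hF
    refine ⟨F, mem_facets'.2 ⟨hF.1, ?_⟩, hF.2⟩
    intro G hG hFG
    exact Finset.eq_of_subset_of_card_le hFG
      (hmax G (mem_filter.2 ⟨hG, hF.2.trans hFG⟩))

lemma card_filter_card' (k : ℕ) :
    ((univ : Finset (Finset (Fin n))).filter fun A => A.card = k).card = n.choose k := by
  rw [← Finset.powerset_univ, ← Finset.powersetCard_eq_filter, Finset.card_powersetCard,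
    Finset.card_univ, Fintype.card_fin]

lemma mem_cdual' {Γ : Finset (Finset (Fin n))} {A : Finset (Fin n)} :
    A ∈ cdual Γ ↔ Aᶜ ∉ nonfaceComplex Γ := by
  rw [cdual, mem_generated', mem_nfc']
  push_neg
  constructor
  · rintro ⟨G, hG, hAG⟩
    obtain ⟨F, hF, rfl⟩ := mem_image.1 hG
    exact ⟨F, hF, Finset.subset_compl_comm.1 hAG⟩
  · rintro ⟨F, hF, hFA⟩
    exact ⟨Fᶜ, mem_image_of_mem _ hF, Finset.subset_compl_comm.2 hFA⟩

lemma facets_cdual' (Γ : Finset (Finset (Fin n))) :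
    facets (cdual Γ) = (facets Γ).image fun F => Fᶜ := by
  apply facets_generated'
  intro F hF G hG hFG
  obtain ⟨F', hF', rfl⟩ := mem_image.1 hF
  obtain ⟨G', hG', rfl⟩ := mem_image.1 hG
  have : G' ⊆ F' := by rwa [← Finset.compl_subset_compl]
  rw [facets_antichain' Γ G' hG' F' hF' this]

lemma mem_nfc_cdual' {Γ : Finset (Finset (Fin n))} {A : Finset (Fin n)} :
    A ∈ nonfaceComplex (cdual Γ) ↔ Aᶜ ∉ generated (facets Γ) := by
  rw [mem_nfc', facets_cdual', mem_generated']
  simp only [mem_image]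
  push_neg
  constructor
  · intro h F hF
    have := h Fᶜ ⟨F, hF, rfl⟩
    rwa [← Finset.compl_subset_compl, compl_compl] at this
  · rintro h G ⟨F, hF, rfl⟩ hGA
    exact h F hF (by rwa [← Finset.compl_subset_compl, compl_compl] at hGA)

lemma filter_card_empty' (S : Finset (Finset (Fin n))) {k : ℕ} (hk : n < k) :
    (S.filter fun A => A.card = k).card = 0 := by
  rw [Finset.card_eq_zero, Finset.filter_eq_empty_iff]
  intro A _ h
  have := A.card_le_univ
  rw [Fintype.card_fin] at this
  omega

lemma compl_filter_card' (S : Finset (Finset (Fin n))) {k : ℕ} (hk : k ≤ n)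
    [DecidablePred (· ∈ S)] :
    ((univ.filter fun A : Finset (Fin n) => A.card = k ∧ Aᶜ ∉ S).card)
      + ((S.filter fun B => B.card = n - k).card) = n.choose k := by
  have himg : (univ.filter fun A : Finset (Fin n) => A.card = k ∧ Aᶜ ∉ S)
      = ((univ.filter fun B : Finset (Fin n) => B.card = n - k)
          \ (S.filter fun B => B.card = n - k)).image (fun B => Bᶜ) := by
    ext A
    simp only [mem_image, mem_sdiff, mem_filter, mem_univ, true_and]
    constructor
    · rintro ⟨hcard, hnot⟩
      refine ⟨Aᶜ, ⟨?_, ?_⟩, compl_compl A⟩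
      · rw [Finset.card_compl, Fintype.card_fin, hcard]
      · intro h; exact hnot h.1
    · rintro ⟨B, ⟨hcard, hnot⟩, rfl⟩
      have hBle : B.card ≤ n := by
        have := B.card_le_univ; rwa [Fintype.card_fin] at this
      constructor
      · rw [Finset.card_compl, Fintype.card_fin]; omega
      · rw [compl_compl]; intro h; exact hnot ⟨h, hcard⟩
  rw [himg, Finset.card_image_of_injective _ (fun a b h => compl_injective h),
    Finset.card_sdiff_of_subset (Finset.filter_subset_filter _ (Finset.subset_univ S)),
    card_filter_card']
  have hle : ((S.filter fun B => B.card = n - k).card)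
      ≤ ((univ.filter fun B : Finset (Fin n) => B.card = n - k).card) :=
    Finset.card_le_card (Finset.filter_subset_filter _ (Finset.subset_univ S))
  rw [card_filter_card'] at hle
  rw [Nat.choose_symm hk] at hle ⊢
  omega

lemma core' {𝔉 : Finset (Finset (Fin n))}
    (hac : ∀ F ∈ 𝔉, ∀ G ∈ 𝔉, F ⊆ G → F = G) :
    IsFComplex (generated 𝔉) ↔ IsFComplex (cdual (generated 𝔉)) := by
  classical
  set Γ := generated 𝔉 with hΓ
  have hfac : facets Γ = 𝔉 := facets_generated' hac
  -- claim 1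
  have hc1 : ∀ k ≤ n, (((cdual Γ).filter fun A => A.card = k).card)
      + (((nonfaceComplex Γ).filter fun B => B.card = n - k).card) = n.choose k := by
    intro k hk
    have : ((cdual Γ).filter fun A => A.card = k)
        = univ.filter fun A : Finset (Fin n) => A.card = k ∧ Aᶜ ∉ nonfaceComplex Γ := by
      ext A
      simp only [mem_filter, mem_univ, true_and]
      rw [mem_cdual']
      tauto
    rw [this]
    exact compl_filter_card' _ hk
  -- claim 2
  have hc2 : ∀ k ≤ n, (((nonfaceComplex (cdual Γ)).filter fun A => A.card = k).card)
      + ((Γ.filter fun B => B.card = n - k).card) = n.choose k := by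
    intro k hk
    have : ((nonfaceComplex (cdual Γ)).filter fun A => A.card = k)
        = univ.filter fun A : Finset (Fin n) => A.card = k ∧ Aᶜ ∉ Γ := by
      ext A
      simp only [mem_filter, mem_univ, true_and]
      rw [mem_nfc_cdual', hfac, ← hΓ]
      tauto
    rw [this]
    exact compl_filter_card' _ hk
  constructor
  · intro h k
    by_cases hk : k ≤ n
    · have h1 := hc1 k hk
      have h2 := hc2 k hk
      have := h (n - k)
      omega
    · rw [filter_card_empty' _ (by omega), filter_card_empty' _ (by omega)]
  · intro h k
    by_cases hk : k ≤ n
    · have h1 := hc1 (n - k) (by omega)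
      have h2 := hc2 (n - k) (by omega)
      have := h (n - k)
      have hnk : n - (n - k) = k := by omega
      rw [hnk] at h1 h2
      omega
    · rw [filter_card_empty' _ (by omega), filter_card_empty' _ (by omega)]

end Aux

/-- for a pure `(d-1)`-dimensional complex `Δ` on `[n]` whose facet set is a
nonempty proper subfamily of the `d`-element subsets, `Δ` is a strong `f`-simplicial
complex iff `Δ^c` (which is pure `(n-d-1)`-dimensional) is. -/
theorem stmt6 {n d : ℕ} (hd : 1 ≤ d) (hdn : d < n)
    (Δ : Finset (Finset (Fin n))) (hΔ : IsComplex Δ) (hpure : PureDim d Δ)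
    (hne : (facets Δ).Nonempty)
    (hproper : ∃ A : Finset (Fin n), A.card = d ∧ A ∉ facets Δ) :
    IsStrong d Δ ↔ IsStrong (n - d) (cdual Δ) := by
  classical
  have hgen : generated (facets Δ) = Δ := generated_facets' hΔ
  have h1 : IsFComplex Δ ↔ IsFComplex (cdual Δ) := by
    have := core' (facets_antichain' Δ)
    rwa [hgen] at this
  set T := (univ.filter fun A : Finset (Fin n) => A.card = d ∧ A ∉ facets Δ) with hTdef
  have hTac : ∀ F ∈ T, ∀ G ∈ T, F ⊆ G → F = G := by
    intro F hF G hG hFG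
    rw [hTdef, mem_filter] at hF hG
    exact Finset.eq_of_subset_of_card_le hFG (by rw [hF.2.1, hG.2.1])
  have h2 : IsFComplex (hcompl d Δ) ↔ IsFComplex (cdual (hcompl d Δ)) := core' hTac
  have hfT : facets (hcompl d Δ) = T := facets_generated' hTac
  have h3 : hcompl (n - d) (cdual Δ) = cdual (hcompl d Δ) := by
    have hrhs : cdual (hcompl d Δ) = generated (T.image fun F => Fᶜ) := by
      rw [cdual, hfT]
    rw [hrhs, hcompl]
    congr 1
    ext A
    rw [facets_cdual']
    simp only [hTdef, mem_filter, mem_univ, true_and, mem_image]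
    constructor
    · rintro ⟨hcard, hnot⟩
      refine ⟨Aᶜ, ⟨?_, ?_⟩, compl_compl A⟩
      · rw [Finset.card_compl, Fintype.card_fin, hcard]; omega
      · intro h; exact hnot ⟨Aᶜ, h, compl_compl A⟩
    · rintro ⟨B, ⟨hcard, hnot⟩, rfl⟩
      constructor
      · rw [Finset.card_compl, Fintype.card_fin, hcard]
      · rintro ⟨F, hF, hFB⟩
        exact hnot (compl_injective hFB ▸ hF)
  rw [IsStrong, IsStrong, h3]
  exact and_congr h1 h2
end

section
/- Let 1 ≤ d < n and let Δ be a strong f-simplicial complex on [n] that is pure (d−1)-dimensional with facet set a nonempty proper subset of [n]_d. Then the set of minimal nonfaces of Δ equals the set of facets of its homogeneous complement: N(Δ) = F(Δ'). -/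
open Finset

lemma exists_facet' {n : ℕ} {Δ : Finset (Finset (Fin n))} {A : Finset (Fin n)} (hA : A ∈ Δ) :
    ∃ F ∈ facets Δ, A ⊆ F := by
  obtain ⟨F, hF, hmax⟩ := (Δ.filter fun G => A ⊆ G).exists_maximal
    ⟨A, mem_filter.2 ⟨hA, Subset.rfl⟩⟩
  simp only [mem_filter] at hF
  refine ⟨F, mem_filter.2 ⟨hF.1, fun G hG hFG => ?_⟩, hF.2⟩
  by_contra hne
  exact hne (le_antisymm hFG (hmax (mem_filter.2 ⟨hG, hF.2.trans hFG⟩) hFG))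

lemma mem_hcompl_iff {n d : ℕ} {Δ : Finset (Finset (Fin n))} {A : Finset (Fin n)} :
    A ∈ hcompl d Δ ↔ ∃ F : Finset (Fin n), F.card = d ∧ F ∉ facets Δ ∧ A ⊆ F := by
  simp only [hcompl, generated, mem_filter, mem_univ, true_and, and_assoc]

lemma mem_facets_hcompl_iff {n d : ℕ} {Δ : Finset (Finset (Fin n))} {A : Finset (Fin n)} :
    A ∈ facets (hcompl d Δ) ↔ A.card = d ∧ A ∉ facets Δ := by
  constructor
  · intro h
    have h' := mem_filter.1 h
    obtain ⟨F, hFd, hFnf, hAF⟩ := mem_hcompl_iff.1 h'.1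
    have hFm : F ∈ hcompl d Δ := mem_hcompl_iff.2 ⟨F, hFd, hFnf, Subset.rfl⟩
    have : A = F := h'.2 F hFm hAF
    subst this
    exact ⟨hFd, hFnf⟩
  · rintro ⟨hAd, hAnf⟩
    refine mem_filter.2 ⟨mem_hcompl_iff.2 ⟨A, hAd, hAnf, Subset.rfl⟩, fun G hG hAG => ?_⟩
    obtain ⟨F, hFd, _, hGF⟩ := mem_hcompl_iff.1 hG
    exact eq_of_subset_of_card_le hAG (by
      have := card_le_card hGF
      omega)

lemma skeleton_mem {n d : ℕ} {Δ : Finset (Finset (Fin n))} (hpure : PureDim d Δ)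
    (hf : IsFComplex Δ) {A : Finset (Fin n)} (hA : A.card < d) : A ∈ Δ := by
  have h1 : ((nonfaceComplex Δ).filter fun B => B.card = A.card)
      = univ.filter fun B : Finset (Fin n) => B.card = A.card := by
    apply Subset.antisymm
    · intro B hB
      have hB' := mem_filter.1 hB
      exact mem_filter.2 ⟨mem_univ _, hB'.2⟩
    · intro B hB
      have hB' := mem_filter.1 hB
      refine mem_filter.2 ⟨mem_filter.2 ⟨mem_univ _, fun F hF hFB => ?_⟩, hB'.2⟩
      have hd := hpure F hF
      have := card_le_card hFB
      omega
  have h2 := hf A.card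
  rw [h1] at h2
  have hsub : (Δ.filter fun B => B.card = A.card)
      ⊆ univ.filter fun B : Finset (Fin n) => B.card = A.card := by
    intro B hB
    exact mem_filter.2 ⟨mem_univ _, (mem_filter.1 hB).2⟩
  have heq := eq_of_subset_of_card_le hsub (le_of_eq h2.symm)
  have : A ∈ Δ.filter fun B => B.card = A.card := by
    rw [heq]; exact mem_filter.2 ⟨mem_univ _, rfl⟩
  exact (mem_filter.1 this).1

lemma contains_nonfacet {n d : ℕ} {Δ : Finset (Finset (Fin n))}
    (hf' : IsFComplex (hcompl d Δ)) {A : Finset (Fin n)} (hA : A.card = d + 1) :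
    ∃ F : Finset (Fin n), F.card = d ∧ F ∉ facets Δ ∧ F ⊆ A := by
  have hz : ((hcompl d Δ).filter fun B => B.card = d + 1) = ∅ := by
    apply filter_eq_empty_iff.2
    intro B hB hBc
    obtain ⟨F, hFd, _, hBF⟩ := mem_hcompl_iff.1 hB
    have := card_le_card hBF
    omega
  have h2 := hf' (d + 1)
  rw [hz, card_empty] at h2
  have h3 : ((nonfaceComplex (hcompl d Δ)).filter fun B => B.card = d + 1) = ∅ :=
    card_eq_zero.1 h2.symm
  by_contra h
  push_neg at h
  have : A ∈ (nonfaceComplex (hcompl d Δ)).filter fun B => B.card = d + 1 := by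
    refine mem_filter.2 ⟨mem_filter.2 ⟨mem_univ _, fun F hF hFA => ?_⟩, hA⟩
    obtain ⟨hFd, hFnf⟩ := mem_facets_hcompl_iff.1 hF
    exact h F hFd hFnf hFA
  rw [h3] at this
  exact absurd this (notMem_empty _)

/-- for a strong `f`-simplicial complex `Δ` on `[n]`, pure `(d-1)`-dimensional,
with facet set a nonempty proper subfamily of the `d`-element subsets, the minimal nonfaces
of `Δ` are exactly the facets of the homogeneous complement `Δ'`. -/
theorem stmt7 {n d : ℕ} (hd : 1 ≤ d) (hdn : d < n)
    (Δ : Finset (Finset (Fin n))) (hΔ : IsComplex Δ) (hpure : PureDim d Δ)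
    (hne : (facets Δ).Nonempty)
    (hproper : ∃ A : Finset (Fin n), A.card = d ∧ A ∉ facets Δ)
    (hstrong : IsFComplex Δ ∧ IsFComplex (hcompl d Δ)) :
    minNonfaces Δ = facets (hcompl d Δ) := by
  ext A
  rw [mem_facets_hcompl_iff]
  simp only [minNonfaces, mem_filter, mem_univ, true_and]
  constructor
  · rintro ⟨hnA, hmin⟩
    have hge : d ≤ A.card := by
      by_contra h
      push_neg at h
      exact hnA (skeleton_mem hpure hstrong.1 h)
    have hAd2 : A.card = d := by
      by_contra hne
      have hlt : d + 1 ≤ A.card := by omega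
      obtain ⟨A', hA'sub, hA'card⟩ := Finset.exists_subset_card_eq hlt
      obtain ⟨F, hFd, hFnf, hFA'⟩ := contains_nonfacet hstrong.2 hA'card
      have hFA : F ⊂ A := by
        refine ssubset_of_subset_of_ne (hFA'.trans hA'sub) (fun h => ?_)
        rw [h] at hFd
        omega
      have hFΔ : F ∈ Δ := hmin F hFA
      obtain ⟨G, hG, hFG⟩ := exists_facet' hFΔ
      have : F = G := eq_of_subset_of_card_le hFG (by rw [hpure G hG, hFd])
      exact hFnf (this ▸ hG)
    exact ⟨hAd2, fun h => hnA (filter_subset _ _ h)⟩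
  · rintro ⟨hAd, hAnf⟩
    refine ⟨fun hAΔ => ?_, fun B hB => ?_⟩
    · obtain ⟨G, hG, hAG⟩ := exists_facet' hAΔ
      have : A = G := eq_of_subset_of_card_le hAG (by rw [hpure G hG, hAd])
      exact hAnf (this ▸ hG)
    · have := card_lt_card hB
      exact skeleton_mem hpure hstrong.1 (by omega)
end
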